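/- Let τ be a Young diagram, j ≥ 1 an integer, and set r = τ'_j. Let μ be the sequence of row lengths (τ_1 − 1, τ_2 − 1, ..., τ_r − 1, j − 1, τ_{r+1}, τ_{r+2}, ...). Then μ is weakly decreasing, so it is the sequence of row lengths of a Young diagram; |μ| = |τ| − 1 + j − τ'_j; and its column lengths satisfy μ'_i = τ'_i + 1 for 1 ≤ i < j and μ'_i = τ'_{i+1} for i ≥ j. (Thus μ is the (ν−s)-core of τ for s = |τ| − 1 + j − τ'_j, defined by the stated column lengths, and this row description realizes it as the result of removing an (n−s)-hook from τ with a long top row attached.) -/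

import Mathlib

/-- The row-length sequence (1-based index `i`) of the `(ν−s)`-core of `τ`
for `s = |τ| − 1 + j − τ'_j`: the sequence
`(τ_1 − 1, τ_2 − 1, ..., τ_r − 1, j − 1, τ_{r+1}, τ_{r+2}, ...)` where `r = τ'_j`. -/
def coreRow (τ : YoungDiagram) (j : ℕ) (i : ℕ) : ℕ :=
  if i ≤ τ.colLen (j - 1) then τ.rowLen (i - 1) - 1
  else if i = τ.colLen (j - 1) + 1 then j - 1
  else τ.rowLen (i - 2)

/-- A Young diagram's cardinality is the sum of its row lengths over any
range covering all nonempty rows. -/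
lemma card_eq_sum_rowLen (ν : YoungDiagram) (N : ℕ) (hN : ν.colLen 0 ≤ N) :
    ν.card = ∑ i ∈ Finset.range N, ν.rowLen i := by
  rw [YoungDiagram.card,
    Finset.card_eq_sum_card_fiberwise (f := Prod.fst) (t := Finset.range N) ?_]
  · refine Finset.sum_congr rfl fun i _ => ?_
    rw [ν.rowLen_eq_card]
    rfl
  · intro p hp
    rw [Finset.mem_coe, Finset.mem_range]
    have h1 : (p.1, 0) ∈ ν := ν.up_left_mem le_rfl (Nat.zero_le _) hp
    have := YoungDiagram.mem_iff_lt_colLen.mp h1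
    omega

theorem stmt7 (τ : YoungDiagram) (j : ℕ) (hj : 1 ≤ j) :
    (∀ i, 1 ≤ i → coreRow τ j (i + 1) ≤ coreRow τ j i) ∧
    ∃ μ : YoungDiagram,
      (∀ i, 1 ≤ i → μ.rowLen (i - 1) = coreRow τ j i) ∧
      (μ.card : ℤ) = (τ.card : ℤ) - 1 + (j : ℤ) - (τ.colLen (j - 1) : ℤ) ∧
      (∀ i, 1 ≤ i → i < j → μ.colLen (i - 1) = τ.colLen (i - 1) + 1) ∧
      (∀ i, j ≤ i → μ.colLen (i - 1) = τ.colLen i) := by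
  set r := τ.colLen (j - 1) with hr
  set f : ℕ → ℕ := fun i => coreRow τ j (i + 1) with hfdef
  -- values of f
  have hA : ∀ i, i < r → f i = τ.rowLen i - 1 := by
    intro i hi
    show coreRow τ j (i + 1) = _
    unfold coreRow
    rw [if_pos (by omega)]
    have e : i + 1 - 1 = i := by omega
    rw [e]
  have hB : f r = j - 1 := by
    show coreRow τ j (r + 1) = _
    unfold coreRow
    rw [if_neg (by omega)]
    simp [← hr]
  have hC : ∀ i, r < i → f i = τ.rowLen (i - 1) := by
    intro i hi
    show coreRow τ j (i + 1) = _
    unfold coreRow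
    rw [if_neg (by omega), if_neg (by omega)]
    have e : i + 1 - 2 = i - 1 := by omega
    rw [e]
  -- rows meeting column j-1 are long; rows past r are short
  have hτge : ∀ i, i < r → j ≤ τ.rowLen i := by
    intro i hi
    have h1 : (i, j - 1) ∈ τ := YoungDiagram.mem_iff_lt_colLen.mpr hi
    have := YoungDiagram.mem_iff_lt_rowLen.mp h1
    omega
  have hτle : ∀ i, r ≤ i → τ.rowLen i < j := by
    intro i hi
    by_contra h
    have h1 : (i, j - 1) ∈ τ := YoungDiagram.mem_iff_lt_rowLen.mpr (by omega)
    have := YoungDiagram.mem_iff_lt_colLen.mp h1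
    omega
  -- monotonicity
  have fmono : ∀ i, f (i + 1) ≤ f i := by
    intro i
    rcases lt_trichotomy (i + 1) r with h | h | h
    · rw [hA _ h, hA _ (by omega)]
      have h1 := τ.rowLen_anti i (i + 1) (by omega)
      have e : i + 1 - 1 = i := by omega
      omega
    · rw [h, hB, hA i (by omega)]
      have := hτge i (by omega)
      omega
    · rcases Nat.lt_or_ge r i with h2 | h2
      · rw [hC _ h, hC _ h2]
        have e : i + 1 - 1 = i := by omega
        rw [e]
        exact τ.rowLen_anti (i - 1) i (by omega)
      · have hri : r = i := by omega
        rw [hri] at hB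
        rw [hC _ h, hB]
        have := hτle (i + 1 - 1) (by omega)
        omega
  have hanti : Antitone f := antitone_nat_of_succ_le fmono
  have partA : ∀ i, 1 ≤ i → coreRow τ j (i + 1) ≤ coreRow τ j i := by
    intro i hi
    obtain ⟨k, rfl⟩ := Nat.exists_eq_add_of_le' hi
    exact fmono k
  refine ⟨partA, ?_⟩
  -- bounds
  have hrc : r ≤ τ.colLen 0 := τ.colLen_anti 0 (j - 1) (Nat.zero_le _)
  set N := τ.colLen 0 + 2 with hN
  set M := τ.rowLen 0 + j with hM
  have hfN : ∀ i, N ≤ i → f i = 0 := by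
    intro i hi
    rw [hC i (by omega)]
    by_contra h
    have h1 : (i - 1, 0) ∈ τ := YoungDiagram.mem_iff_lt_rowLen.mpr (by omega)
    have := YoungDiagram.mem_iff_lt_colLen.mp h1
    omega
  have hfM : ∀ i, f i < M := by
    intro i
    have h0 : f 0 < M := by
      rcases Nat.eq_zero_or_pos r with h | h
      · have := hB
        rw [h] at this
        rw [this]
        omega
      · rw [hA 0 h]; omega
    exact lt_of_le_of_lt (hanti (Nat.zero_le i)) h0
  -- construct μ
  set μ : YoungDiagram :=
    { cells := (Finset.range N ×ˢ Finset.range M).filter (fun p => p.2 < f p.1)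
      isLowerSet := by
        rintro ⟨a, b⟩ ⟨c, d⟩ ⟨h1, h2⟩ hp
        simp only [Finset.coe_filter, Finset.mem_product, Finset.mem_range,
          Set.mem_setOf_eq] at hp ⊢
        obtain ⟨⟨ha, hb⟩, hab⟩ := hp
        have hfle : f a ≤ f c := hanti h1
        exact ⟨⟨by omega, by omega⟩, by omega⟩ } with hμ
  have memμ : ∀ i c, (i, c) ∈ μ ↔ c < f i := by
    intro i c
    rw [← YoungDiagram.mem_cells, hμ]
    simp only [Finset.mem_filter, Finset.mem_product, Finset.mem_range]
    constructor
    · rintro ⟨-, h⟩; exact h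
    · intro h
      refine ⟨⟨?_, lt_trans h (hfM i)⟩, h⟩
      by_contra hcon
      rw [hfN i (by omega)] at h
      omega
  have hrow : ∀ i, μ.rowLen i = f i := by
    intro i
    refine eq_of_forall_lt_iff fun c => ?_
    rw [← YoungDiagram.mem_iff_lt_rowLen, memμ]
  have hcolμ : ∀ c i, i < μ.colLen c ↔ c < f i := by
    intro c i
    rw [← YoungDiagram.mem_iff_lt_colLen, memμ]
  refine ⟨μ, ?_, ?_, ?_, ?_⟩
  · -- row lengths
    intro i hi
    obtain ⟨k, rfl⟩ := Nat.exists_eq_add_of_le' hi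
    rw [hrow]
    have e : k + 1 - 1 = k := by omega
    rw [e]
  · -- cardinality
    have hN' : μ.colLen 0 ≤ N := by
      by_contra h
      have := (hcolμ 0 N).mp (by omega)
      rw [hfN N le_rfl] at this
      omega
    have h1 : μ.card = ∑ i ∈ Finset.range N, f i := by
      rw [card_eq_sum_rowLen μ N hN']
      exact Finset.sum_congr rfl fun i _ => hrow i
    have h2 : τ.card = ∑ i ∈ Finset.range (N - 1), τ.rowLen i :=
      card_eq_sum_rowLen τ (N - 1) (by omega)
    have key1 : ∑ i ∈ Finset.range N, (f i : ℤ) =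
        (∑ i ∈ Finset.range r, ((τ.rowLen i : ℤ) - 1)) + ((j : ℤ) - 1) +
          ∑ i ∈ Finset.range (N - 1 - r), (τ.rowLen (r + i) : ℤ) := by
      rw [← Finset.sum_range_add_sum_Ico _ (show r + 1 ≤ N by omega),
        Finset.sum_range_succ, Finset.sum_Ico_eq_sum_range]
      congr 1
      · congr 1
        · refine Finset.sum_congr rfl fun i hi => ?_
          rw [Finset.mem_range] at hi
          rw [hA i hi]
          have := hτge i hi
          push_cast [Nat.cast_sub (by omega : 1 ≤ τ.rowLen i)]
          ring
        · rw [hB]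
          push_cast [Nat.cast_sub hj]
          ring
      · have hNr : N - (r + 1) = N - 1 - r := by omega
        rw [hNr]
        refine Finset.sum_congr rfl fun i _ => ?_
        rw [hC (r + 1 + i) (by omega)]
        congr 2
        omega
    have key2 : ∑ i ∈ Finset.range (N - 1), (τ.rowLen i : ℤ) =
        (∑ i ∈ Finset.range r, (τ.rowLen i : ℤ)) +
          ∑ i ∈ Finset.range (N - 1 - r), (τ.rowLen (r + i) : ℤ) := by
      rw [← Finset.sum_range_add_sum_Ico _ (show r ≤ N - 1 by omega),
        Finset.sum_Ico_eq_sum_range]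
    have hc1 : (μ.card : ℤ) = ∑ i ∈ Finset.range N, (f i : ℤ) := by
      rw [h1]; push_cast; ring
    have hc2 : (τ.card : ℤ) = ∑ i ∈ Finset.range (N - 1), (τ.rowLen i : ℤ) := by
      rw [h2]; push_cast; ring
    rw [hc1, key1, hc2, key2, Finset.sum_sub_distrib]
    simp only [Finset.sum_const, Finset.card_range, nsmul_eq_mul, mul_one]
    ring
  · -- columns left of j
    intro i hi hij
    refine eq_of_forall_lt_iff fun k => ?_
    rw [hcolμ]
    set c := i - 1 with hc
    have hc1 : c + 1 ≤ j - 1 := by omega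
    constructor
    · intro h
      rcases lt_trichotomy k r with hk | hk | hk
      · have := τ.colLen_anti c (j - 1) (by omega)
        omega
      · have := τ.colLen_anti c (j - 1) (by omega)
        omega
      · rw [hC k hk] at h
        have h1 : (k - 1, c) ∈ τ := YoungDiagram.mem_iff_lt_rowLen.mpr h
        have := YoungDiagram.mem_iff_lt_colLen.mp h1
        omega
    · intro h
      rcases lt_trichotomy k r with hk | hk | hk
      · rw [hA k hk]
        have h1 : k < τ.colLen (c + 1) := by
          have := τ.colLen_anti (c + 1) (j - 1) hc1
          omega
        have h2 : (k, c + 1) ∈ τ := YoungDiagram.mem_iff_lt_colLen.mpr h1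
        have := YoungDiagram.mem_iff_lt_rowLen.mp h2
        omega
      · rw [hk, hB]
        omega
      · rw [hC k hk]
        have h1 : (k - 1, c) ∈ τ := YoungDiagram.mem_iff_lt_colLen.mpr (by omega)
        have := YoungDiagram.mem_iff_lt_rowLen.mp h1
        omega
  · -- columns from j on
    intro i hi
    refine eq_of_forall_lt_iff fun k => ?_
    rw [hcolμ]
    set c := i - 1 with hc
    have hci : i = c + 1 := by omega
    rw [hci]
    have hcj : j - 1 ≤ c := by omega
    have hcol_le : τ.colLen (c + 1) ≤ r := τ.colLen_anti (j - 1) (c + 1) (by omega)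
    constructor
    · intro h
      rcases lt_trichotomy k r with hk | hk | hk
      · rw [hA k hk] at h
        have h1 : (k, c + 1) ∈ τ := YoungDiagram.mem_iff_lt_rowLen.mpr (by omega)
        exact YoungDiagram.mem_iff_lt_colLen.mp h1
      · rw [hk, hB] at h
        omega
      · rw [hC k hk] at h
        have := hτle (k - 1) (by omega)
        omega
    · intro h
      have hk : k < r := by omega
      rw [hA k hk]
      have h1 : (k, c + 1) ∈ τ := YoungDiagram.mem_iff_lt_colLen.mpr h
      have := YoungDiagram.mem_iff_lt_rowLen.mp h1
      omega
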